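/- Let k > 2 and a₁ < … < a_k be reals, and suppose real numbers d, o with 0 < d ≤ a_k − a₁ satisfy N_{d,o}(A) < c₂ for some constant c₂ > 0. Then there exists a positive integer q such that max_{2≤i≤k−1} ‖q·αᵢ‖ < 6·c₂·q^{−1/(k−2)} and |(a_k − a₁)/d − q| < 3·c₂·q^{−1/(k−2)}, where αᵢ = (aᵢ − a₁)/(a_k − a₁) and ‖·‖ denotes distance to the nearest integer. -/

import Mathlib

open Real


private lemma scal1 (Q t ε : ℝ) (hε0 : 0 ≤ ε) (ht1 : 1 ≤ t) (hA : Q ≤ t) :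
    Q * (2 * ε) + (t + 1) * (2 * ε) ≤ 6 * ε * t := by nlinarith

private lemma scal2 (A B ε c : ℝ) (h1 : A ≤ 2 * ε * B) (h2 : ε * B < c) (hc : 0 < c) :
    A < 3 * c := by nlinarith

private lemma scal3 (Q t QS TS : ℝ) (h : Q * QS ≤ 3 / 2 * (t * TS)) (hQpos : 0 < Q)
    (ht : t < Q) (hTS : 0 < TS) (hQS : 0 < QS) : QS < 3 / 2 * TS := by
  nlinarith [mul_pos hQpos hTS]

private lemma scal5 (δ ε QS TS c : ℝ) (h1 : δ ≤ 2 * ε) (h2 : QS < 3 / 2 * TS)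
    (h3 : ε * TS < c) (h4 : 0 < QS) (h5 : 0 < TS) (h6 : 0 < ε) : δ * QS < 3 * c := by
  nlinarith [mul_lt_mul_of_pos_left h2 h6, mul_le_mul_of_nonneg_right h1 h4.le]

private lemma scal6 (A ε TS c : ℝ) (h1 : A ≤ 1 / 2 * TS) (h2 : ε * TS < c)
    (h3 : 1 / 5 ≤ ε) (h4 : 0 < TS) : A < 6 * c := by nlinarith

private lemma scal7 (δ TS ε c B : ℝ) (h1 : B ≤ (1 - δ) * TS) (hδ : 2 / 5 ≤ δ)
    (hδe : δ ≤ 2 * ε) (h2 : ε * TS < c) (h4 : 0 < TS) : B < 3 * c := by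
  nlinarith [mul_le_mul_of_nonneg_right (show (1 : ℝ) - δ ≤ 3 * ε by linarith) h4.le]

private lemma scal8 (T U : ℝ) (h : 3 / 2 * T < T * U) (hT : 0 < T) : 3 / 2 < U := by
  nlinarith

private lemma scal9 (A B : ℝ) (h : 3 / 2 < A / B) (hB : 0 < B) : 3 / 2 * B < A := by
  rw [lt_div_iff₀ hB] at h; linarith

private lemma scal10 (Q t : ℝ) (ht1 : 1 ≤ t) (hδpos : 0 < Q - t) (hB2b : Q - t < 2 / 5)
    (hQtsq : 3 / 2 * t ^ 2 < Q ^ 2) : t < 24 / 5 * (Q - t) := by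
  have hd2 : (Q - t) * (Q - t) < 2 / 5 * (Q - t) := mul_lt_mul_of_pos_right hB2b hδpos
  have hd3 : 2 / 5 * (Q - t) ≤ 2 / 5 * (t * (Q - t)) := by nlinarith [ht1, hδpos]
  nlinarith [hQtsq, hd2, hd3, hδpos]

private lemma scal11 (x : ℝ) (h : 6 / 5 < x) : (6 / 5 : ℝ) ^ 2 < x ^ 2 := by nlinarith

private lemma scal12 (ε TS c δ : ℝ) (h1 : ε * TS < c) (h2 : 36 / 25 < TS)
    (h3 : δ / 2 ≤ ε) (h4 : 0 < δ) : 18 / 25 * δ < c := by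
  nlinarith [mul_le_mul_of_nonneg_right h3 (by linarith : (0 : ℝ) ≤ TS)]

private lemma scal13 (x c t : ℝ) (hx : x ≤ 1 / 2) (hc : 18 / 25 * (2 - t) < c)
    (h2 : t ^ 2 < 8 / 3) (h3 : 8 / 5 < t) : x < 6 * c := by nlinarith

private lemma scal14 (c t : ℝ) (hc : 18 / 25 * (2 - t) < c) (h2 : t ^ 2 < 8 / 3)
    (h3 : 8 / 5 < t) : t - 1 < 3 * c := by nlinarith [sq_nonneg (t - 133 / 79)]

set_option maxHeartbeats 1000000 in
private theorem inhom_to_hom_aux (k : ℕ) (hk : 2 < k) (a : Fin k → ℝ) (hmono : StrictMono a)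
    (d o c₂ : ℝ) (hc : 0 < c₂) (hd : 0 < d) (i0 iK : Fin k)
    (h0 : (i0 : ℕ) = 0) (hKk : (iK : ℕ) = k - 1)
    (hd1 : d ≤ a iK - a i0)
    (hN : (⨆ i : Fin k, ⨅ m : ℤ, |a i - o - (m : ℝ) * d|) / d *
      ((a iK - a i0) / d) ^ ((1 : ℝ) / ((k : ℝ) - 2)) < c₂) :
    ∃ q : ℕ, 0 < q ∧
      (∀ i : Fin k, 0 < (i : ℕ) → (i : ℕ) < k - 1 →
        |(q : ℝ) * ((a i - a i0) / (a iK - a i0)) -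
          round ((q : ℝ) * ((a i - a i0) / (a iK - a i0)))| <
          6 * c₂ * (q : ℝ) ^ (-(1 : ℝ) / ((k : ℝ) - 2))) ∧
      |(a iK - a i0) / d - (q : ℝ)| < 3 * c₂ * (q : ℝ) ^ (-(1 : ℝ) / ((k : ℝ) - 2)) := by
  -- basic index facts
  have hik : i0 < iK := by
    rw [Fin.lt_def, h0, hKk]; omega
  have hT : 0 < a iK - a i0 := sub_pos.2 (hmono hik)
  set ε : ℝ := (⨆ i : Fin k, ⨅ m : ℤ, |a i - o - (m : ℝ) * d|) / d with hε
  set t : ℝ := (a iK - a i0) / d with ht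
  set s : ℝ := (1 : ℝ) / ((k : ℝ) - 2) with hs
  clear_value ε t s
  have hk3 : (3 : ℝ) ≤ (k : ℝ) := by exact_mod_cast hk
  have hs0 : 0 < s := by
    rw [hs]; apply div_pos one_pos; linarith
  have hs1 : s ≤ 1 := by
    rw [hs, div_le_one (by linarith)]; linarith
  have ht1 : 1 ≤ t := by rw [ht]; exact (one_le_div hd).2 hd1
  have ht0 : 0 < t := lt_of_lt_of_le one_pos ht1
  -- the rounding data
  set m : Fin k → ℤ := fun i => round ((a i - o) / d) with hm
  set e : Fin k → ℝ := fun i => (a i - o) / d - m i with he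
  clear_value m e
  have heval : ∀ i, a i - o = ((m i : ℝ) + e i) * d := by
    intro i
    rw [he]
    field_simp
    ring
  have he2 : ∀ i, |e i| ≤ 1 / 2 := by
    intro i
    simp only [he, hm]
    exact abs_sub_round _
  have heε : ∀ i, |e i| ≤ ε := by
    intro i
    have hle : ∀ z : ℤ, |a i - o - (m i : ℝ) * d| ≤ |a i - o - (z : ℝ) * d| := by
      intro z
      have h1 : a i - o - (m i : ℝ) * d = ((a i - o) / d - m i) * d := by
        field_simp
      have h2 : a i - o - (z : ℝ) * d = ((a i - o) / d - z) * d := by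
        field_simp
      rw [h1, h2, abs_mul, abs_mul]
      simp only [he, hm]
      exact mul_le_mul_of_nonneg_right (round_le _ z) (abs_nonneg d)
    have h3 : |a i - o - (m i : ℝ) * d| ≤ ⨅ z : ℤ, |a i - o - (z : ℝ) * d| :=
      le_ciInf hle
    have h4 : (⨅ z : ℤ, |a i - o - (z : ℝ) * d|) ≤
        ⨆ j : Fin k, ⨅ z : ℤ, |a j - o - (z : ℝ) * d| :=
      le_ciSup (f := fun j : Fin k => ⨅ z : ℤ, |a j - o - (z : ℝ) * d|)
        (Set.Finite.bddAbove (Set.finite_range _)) i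
    have h5 : |a i - o - (m i : ℝ) * d| ≤ ε * d := by
      rw [hε, div_mul_cancel₀ _ (ne_of_gt hd)]
      exact h3.trans h4
    have h6 : |e i| * d = |a i - o - (m i : ℝ) * d| := by
      rw [he]
      have h7 : a i - o - (m i : ℝ) * d = ((a i - o) / d - m i) * d := by
        field_simp
      rw [h7, abs_mul, abs_of_pos hd]
    exact le_of_mul_le_mul_right (by rw [h6]; exact h5) hd
  have hε0 : 0 ≤ ε := le_trans (abs_nonneg _) (heε i0)
  have hεts : ε * t ^ s < c₂ := hN
  -- difference identity
  have hDi : ∀ i : Fin k, a i - a i0 = (((m i - m i0 : ℤ) : ℝ) + (e i - e i0)) * d := by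
    intro i
    have h1 := heval i
    have h2 := heval i0
    push_cast
    linear_combination h1 - h2
  have htq : t = ((m iK - m i0 : ℤ) : ℝ) + (e iK - e i0) := by
    rw [ht, hDi iK]
    field_simp
  -- interior point bounds
  have hPbound : ∀ i : Fin k, 0 < (i : ℕ) → (i : ℕ) < k - 1 →
      (0 ≤ (m i - m i0 : ℤ) ∧ ((m i - m i0 : ℤ) : ℝ) + (e i - e i0) < t ∧
        0 < ((m i - m i0 : ℤ) : ℝ) + (e i - e i0)) := by
    intro i hi1 hi2
    have hlt1 : i0 < i := by rw [Fin.lt_def, h0]; omega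
    have hlt2 : i < iK := by rw [Fin.lt_def, hKk]; omega
    have ha1 : 0 < a i - a i0 := sub_pos.2 (hmono hlt1)
    have ha2 : a i - a i0 < a iK - a i0 := by have := hmono hlt2; linarith
    rw [hDi i] at ha1 ha2
    have hb1 : 0 < ((m i - m i0 : ℤ) : ℝ) + (e i - e i0) := by
      rcases mul_pos_iff.1 ha1 with ⟨h, _⟩ | ⟨_, h⟩
      · exact h
      · linarith
    have hb2 : ((m i - m i0 : ℤ) : ℝ) + (e i - e i0) < t := by
      have hTd : a iK - a i0 = t * d := by rw [ht]; field_simp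
      rw [hTd] at ha2
      exact lt_of_mul_lt_mul_right ha2 hd.le
    refine ⟨?_, hb2, hb1⟩
    obtain ⟨h1a, h1b⟩ := abs_le.1 (he2 i)
    obtain ⟨h2a, h2b⟩ := abs_le.1 (he2 i0)
    have : (-1 : ℝ) < ((m i - m i0 : ℤ) : ℝ) := by linarith
    have : (-1 : ℤ) < m i - m i0 := by exact_mod_cast this
    omega
  have hTd : a iK - a i0 = t * d := by rw [ht]; field_simp
  have hee : ∀ i j : Fin k, |e i - e j| ≤ 2 * ε := by
    intro i j
    calc |e i - e j| ≤ |e i| + |e j| := abs_sub _ _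
    _ ≤ 2 * ε := by linarith [heε i, heε j]
  have hee1 : ∀ i j : Fin k, |e i - e j| ≤ 1 := by
    intro i j
    calc |e i - e j| ≤ |e i| + |e j| := abs_sub _ _
    _ ≤ 1 := by linarith [he2 i, he2 j]
  -- the main estimate
  have est : ∀ i : Fin k, 0 < (i : ℕ) → (i : ℕ) < k - 1 → ∀ qq : ℤ,
      |(qq : ℝ) * ((a i - a i0) / (a iK - a i0)) -
          round ((qq : ℝ) * ((a i - a i0) / (a iK - a i0)))| * t ≤
        |(qq : ℝ)| * |e i - e i0| + |((m i - m i0 : ℤ) : ℝ)| * |t - qq| := by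
    intro i hi1 hi2 qq
    have hα : (a i - a i0) / (a iK - a i0) =
        (((m i - m i0 : ℤ) : ℝ) + (e i - e i0)) / t := by
      rw [hDi i, hTd]
      rw [mul_div_mul_right _ _ (ne_of_gt hd)]
    set x := (qq : ℝ) * ((a i - a i0) / (a iK - a i0)) with hx
    have h1 : |x - round x| ≤ |x - ((m i - m i0 : ℤ) : ℝ)| := round_le x _
    have h2 : x - ((m i - m i0 : ℤ) : ℝ) =
        ((qq : ℝ) * (e i - e i0) - ((m i - m i0 : ℤ) : ℝ) * (t - qq)) / t := by
      rw [hx, hα]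
      field_simp
      ring
    calc |x - round x| * t ≤ |x - ((m i - m i0 : ℤ) : ℝ)| * t :=
          mul_le_mul_of_nonneg_right h1 ht0.le
    _ = |(qq : ℝ) * (e i - e i0) - ((m i - m i0 : ℤ) : ℝ) * (t - qq)| := by
        rw [h2, abs_div, abs_of_pos ht0, div_mul_cancel₀ _ (ne_of_gt ht0)]
    _ ≤ |(qq : ℝ) * (e i - e i0)| + |((m i - m i0 : ℤ) : ℝ) * (t - qq)| := abs_sub _ _
    _ = |(qq : ℝ)| * |e i - e i0| + |((m i - m i0 : ℤ) : ℝ)| * |t - qq| := by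
        rw [abs_mul, abs_mul]
  -- reduce to the multiplied form
  suffices H : ∃ q : ℕ, 0 < q ∧
      (∀ i : Fin k, 0 < (i : ℕ) → (i : ℕ) < k - 1 →
        |(q : ℝ) * ((a i - a i0) / (a iK - a i0)) -
            round ((q : ℝ) * ((a i - a i0) / (a iK - a i0)))| * (q : ℝ) ^ s < 6 * c₂) ∧
      |t - (q : ℝ)| * (q : ℝ) ^ s < 3 * c₂ by
    obtain ⟨q, hq, H1, H2⟩ := H
    have hq0 : (0 : ℝ) < (q : ℝ) := by exact_mod_cast hq
    have hqs : 0 < (q : ℝ) ^ s := rpow_pos_of_pos hq0 _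
    have hneg : ∀ C : ℝ, C * (q : ℝ) ^ (-(1 : ℝ) / ((k : ℝ) - 2)) = C / (q : ℝ) ^ s := by
      intro C
      rw [neg_div, ← hs, rpow_neg hq0.le, div_eq_mul_inv]
    refine ⟨q, hq, ?_, ?_⟩
    · intro i hi1 hi2
      rw [hneg]
      exact (lt_div_iff₀ hqs).2 (H1 i hi1 hi2)
    · rw [hneg]
      exact (lt_div_iff₀ hqs).2 H2
  set q0 : ℤ := m iK - m i0 with hq0def
  clear_value q0
  have htmq0 : |t - ((q0 : ℤ) : ℝ)| ≤ 2 * ε := by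
    have h4 : t - ((q0 : ℤ) : ℝ) = e iK - e i0 := by rw [htq]; push_cast; ring
    rw [h4]; exact hee iK i0
  have htmq1 : |t - ((q0 : ℤ) : ℝ)| ≤ 1 := by
    have h4 : t - ((q0 : ℤ) : ℝ) = e iK - e i0 := by rw [htq]; push_cast; ring
    rw [h4]; exact hee1 iK i0
  rcases le_or_gt ((q0 : ℝ)) t with hA | hB
  · rcases le_or_gt q0 0 with hA0 | hA1
    · -- degenerate case : t = 1
      have hq0r : ((q0 : ℤ) : ℝ) ≤ 0 := by exact_mod_cast hA0
      have h4 : t - ((q0 : ℤ) : ℝ) = e iK - e i0 := by rw [htq]; push_cast; ring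
      have hteq : t = 1 := by
        have h5 := abs_le.1 (hee1 iK i0)
        have h6 : t - (q0 : ℝ) ≤ 1 := by rw [h4]; linarith [h5.2]
        linarith [ht1]
      have hc2 : 1 / 2 < c₂ := by
        have h3 := abs_le.1 (hee iK i0)
        have h7 : (1 : ℝ) ≤ 2 * ε := by
          have : (1 : ℝ) ≤ e iK - e i0 := by rw [← h4]; linarith [hteq ▸ ht1]
          linarith [h3.2]
        have h8 : t ^ s = 1 := by rw [hteq, one_rpow]
        rw [h8, mul_one] at hεts
        linarith
      refine ⟨1, one_pos, ?_, ?_⟩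
      · intro i hi1 hi2
        have hx := abs_sub_round (((1 : ℕ) : ℝ) * ((a i - a i0) / (a iK - a i0)))
        simp only [Nat.cast_one, one_rpow, mul_one]
        simp only [Nat.cast_one] at hx
        linarith
      · simp only [Nat.cast_one, one_rpow, mul_one, hteq]
        norm_num
        linarith
    · -- main case A1 : 1 ≤ q0 ≤ t, use q = q0
      have hq1 : (1 : ℝ) ≤ ((q0 : ℤ) : ℝ) := by exact_mod_cast hA1
      have hcast : ((q0.toNat : ℕ) : ℝ) = ((q0 : ℤ) : ℝ) := by
        rw [← Int.cast_natCast, Int.toNat_of_nonneg (by omega)]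
      have hQs : ((q0 : ℤ) : ℝ) ^ s ≤ t ^ s := rpow_le_rpow (by linarith) hA hs0.le
      have htspos : (0 : ℝ) < t ^ s := rpow_pos_of_pos ht0 s
      refine ⟨q0.toNat, by omega, ?_, ?_⟩
      · intro i hi1 hi2
        rw [hcast]
        obtain ⟨hp0, hpt, hppos⟩ := hPbound i hi1 hi2
        have hPnn : (0 : ℝ) ≤ ((m i - m i0 : ℤ) : ℝ) := by exact_mod_cast hp0
        have hfi := abs_le.1 (hee1 i i0)
        have hPle : ((m i - m i0 : ℤ) : ℝ) ≤ t + 1 := by linarith [hfi.1]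
        have hest := est i hi1 hi2 q0
        have hfe := hee i i0
        have habsq : |((q0 : ℤ) : ℝ)| = ((q0 : ℤ) : ℝ) := abs_of_nonneg (by linarith)
        have habsP : |((m i - m i0 : ℤ) : ℝ)| = ((m i - m i0 : ℤ) : ℝ) :=
          abs_of_nonneg hPnn
        rw [habsq, habsP] at hest
        set X := |((q0 : ℤ) : ℝ) * ((a i - a i0) / (a iK - a i0)) -
            round (((q0 : ℤ) : ℝ) * ((a i - a i0) / (a iK - a i0)))| with hXdef
        clear_value X
        have hXnn : 0 ≤ X := by rw [hXdef]; exact abs_nonneg _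
        have h9 : ((q0 : ℤ) : ℝ) * |e i - e i0| ≤ ((q0 : ℤ) : ℝ) * (2 * ε) :=
          mul_le_mul_of_nonneg_left hfe (by linarith)
        have h10 : ((m i - m i0 : ℤ) : ℝ) * |t - ((q0 : ℤ) : ℝ)| ≤ (t + 1) * (2 * ε) :=
          mul_le_mul hPle htmq0 (abs_nonneg _) (by linarith)
        have hscal : ((q0 : ℤ) : ℝ) * (2 * ε) + (t + 1) * (2 * ε) ≤ 6 * ε * t :=
          scal1 _ _ _ hε0 ht1 hA
        have hXt : X * t ≤ 6 * ε * t := by linarith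
        have hX : X ≤ 6 * ε := le_of_mul_le_mul_right (by linarith) ht0
        have hfin : X * ((q0 : ℤ) : ℝ) ^ s ≤ (6 * ε) * t ^ s :=
          mul_le_mul hX hQs (rpow_nonneg (by linarith) s) (by linarith)
        have : (6 * ε) * t ^ s < 6 * c₂ := by linarith [hεts]
        linarith
      · rw [hcast]
        have h1 : |t - ((q0 : ℤ) : ℝ)| * ((q0 : ℤ) : ℝ) ^ s ≤ (2 * ε) * t ^ s :=
          mul_le_mul htmq0 hQs (rpow_nonneg (by linarith) s) (by linarith)
        exact scal2 _ _ _ _ h1 hεts hc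
  · -- case B : t < q0
    have hq02 : 2 ≤ q0 := by
      have h1 : (1 : ℝ) < (q0 : ℝ) := lt_of_le_of_lt ht1 hB
      have h2 : (1 : ℤ) < q0 := by exact_mod_cast h1
      omega
    have hQ2 : (2 : ℝ) ≤ ((q0 : ℤ) : ℝ) := by exact_mod_cast hq02
    have hδpos : 0 < ((q0 : ℤ) : ℝ) - t := by linarith
    have hδle : ((q0 : ℤ) : ℝ) - t ≤ 2 * ε := by
      have := abs_le.1 htmq0
      linarith [this.1]
    have hδ1 : ((q0 : ℤ) : ℝ) - t ≤ 1 := by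
      have := abs_le.1 htmq1
      linarith [this.1]
    have hεpos : 0 < ε := by linarith
    have htspos : (0 : ℝ) < t ^ s := rpow_pos_of_pos ht0 s
    have hQpos : (0 : ℝ) < ((q0 : ℤ) : ℝ) := by linarith
    have hQspos : (0 : ℝ) < ((q0 : ℤ) : ℝ) ^ s := rpow_pos_of_pos hQpos s
    rcases le_or_gt (((q0 : ℤ) : ℝ) ^ ((1 : ℝ) + s)) (3 / 2 * t ^ ((1 : ℝ) + s)) with hB1 | hB2
    · -- case B1 : use q = q0
      have hQadd : ((q0 : ℤ) : ℝ) ^ ((1 : ℝ) + s) = ((q0 : ℤ) : ℝ) * ((q0 : ℤ) : ℝ) ^ s := by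
        rw [rpow_add hQpos, rpow_one]
      have htadd : t ^ ((1 : ℝ) + s) = t * t ^ s := by
        rw [rpow_add ht0, rpow_one]
      rw [hQadd, htadd] at hB1
      have hq0s : ((q0 : ℤ) : ℝ) ^ s < 3 / 2 * t ^ s :=
        scal3 _ _ _ _ hB1 hQpos hB htspos hQspos
      have hcast : ((q0.toNat : ℕ) : ℝ) = ((q0 : ℤ) : ℝ) := by
        rw [← Int.cast_natCast, Int.toNat_of_nonneg (by omega)]
      refine ⟨q0.toNat, by omega, ?_, ?_⟩
      · intro i hi1 hi2
        rw [hcast]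
        obtain ⟨hp0, hpt, hppos⟩ := hPbound i hi1 hi2
        have hPnn : (0 : ℝ) ≤ ((m i - m i0 : ℤ) : ℝ) := by exact_mod_cast hp0
        have hPQ : ((m i - m i0 : ℤ) : ℝ) ≤ ((q0 : ℤ) : ℝ) := by
          have h1 : ((m i - m i0 : ℤ) : ℝ) < ((q0 : ℤ) : ℝ) + 1 := by
            have hfi := abs_le.1 (hee1 i i0)
            linarith [hfi.1]
          have h2 : m i - m i0 < q0 + 1 := by exact_mod_cast h1
          have h3 : m i - m i0 ≤ q0 := by omega
          exact_mod_cast h3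
        have hest := est i hi1 hi2 q0
        have hfe := hee i i0
        have habsq : |((q0 : ℤ) : ℝ)| = ((q0 : ℤ) : ℝ) := abs_of_nonneg (by linarith)
        have habsP : |((m i - m i0 : ℤ) : ℝ)| = ((m i - m i0 : ℤ) : ℝ) :=
          abs_of_nonneg hPnn
        rw [habsq, habsP] at hest
        set X := |((q0 : ℤ) : ℝ) * ((a i - a i0) / (a iK - a i0)) -
            round (((q0 : ℤ) : ℝ) * ((a i - a i0) / (a iK - a i0)))| with hXdef
        clear_value X
        have hXnn : 0 ≤ X := by rw [hXdef]; exact abs_nonneg _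
        have h9 : ((q0 : ℤ) : ℝ) * |e i - e i0| ≤ ((q0 : ℤ) : ℝ) * (2 * ε) :=
          mul_le_mul_of_nonneg_left hfe (by linarith)
        have h10 : ((m i - m i0 : ℤ) : ℝ) * |t - ((q0 : ℤ) : ℝ)| ≤
            ((q0 : ℤ) : ℝ) * (2 * ε) :=
          mul_le_mul hPQ htmq0 (abs_nonneg _) (by linarith)
        have hXt : X * t ≤ 4 * ε * ((q0 : ℤ) : ℝ) := by linarith
        have h11 := mul_le_mul_of_nonneg_right hXt hQspos.le
        have h12 : 4 * ε * (((q0 : ℤ) : ℝ) * ((q0 : ℤ) : ℝ) ^ s) ≤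
            4 * ε * (3 / 2 * (t * t ^ s)) :=
          mul_le_mul_of_nonneg_left hB1 (by linarith)
        have h13 : (6 * (ε * t ^ s)) * t < (6 * c₂) * t :=
          mul_lt_mul_of_pos_right (by linarith) ht0
        have h14 : (X * ((q0 : ℤ) : ℝ) ^ s) * t < (6 * c₂) * t := by linarith [h11, h12, h13]
        exact lt_of_mul_lt_mul_right (by linarith [h14]) ht0.le
      · rw [hcast]
        have habs : |t - ((q0 : ℤ) : ℝ)| = ((q0 : ℤ) : ℝ) - t := by
          rw [abs_of_nonpos (by linarith)]; ring
        rw [habs]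
        exact scal5 _ _ _ _ _ hδle hq0s hεts hQspos htspos hεpos
    · -- case B2
      rcases le_or_gt (2 / 5 : ℝ) (((q0 : ℤ) : ℝ) - t) with hB2a | hB2b
      · -- case B2a : use q = q0 - 1
        have hcast : (((q0 - 1).toNat : ℕ) : ℝ) = ((q0 : ℤ) : ℝ) - 1 := by
          rw [← Int.cast_natCast, Int.toNat_of_nonneg (by omega)]
          push_cast; ring
        have hQ1t : ((q0 : ℤ) : ℝ) - 1 ≤ t := by linarith
        have hQ1s : (((q0 : ℤ) : ℝ) - 1) ^ s ≤ t ^ s :=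
          rpow_le_rpow (by linarith) hQ1t hs0.le
        refine ⟨(q0 - 1).toNat, by omega, ?_, ?_⟩
        · intro i hi1 hi2
          rw [hcast]
          have hx := abs_sub_round ((((q0 : ℤ) : ℝ) - 1) * ((a i - a i0) / (a iK - a i0)))
          have h1 : |(((q0 : ℤ) : ℝ) - 1) * ((a i - a i0) / (a iK - a i0)) -
              round ((((q0 : ℤ) : ℝ) - 1) * ((a i - a i0) / (a iK - a i0)))| *
              (((q0 : ℤ) : ℝ) - 1) ^ s ≤ 1 / 2 * t ^ s := by
            apply mul_le_mul hx hQ1s (rpow_nonneg (by linarith) s) (by norm_num)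
          exact scal6 _ _ _ _ h1 hεts (by linarith) htspos
        · rw [hcast]
          have habs : |t - (((q0 : ℤ) : ℝ) - 1)| = 1 - (((q0 : ℤ) : ℝ) - t) := by
            rw [abs_of_nonneg (by linarith)]; ring
          rw [habs]
          have h1 : (1 - (((q0 : ℤ) : ℝ) - t)) * (((q0 : ℤ) : ℝ) - 1) ^ s ≤
              (1 - (((q0 : ℤ) : ℝ) - t)) * t ^ s := by
            apply mul_le_mul_of_nonneg_left hQ1s (by linarith)
          exact scal7 _ _ _ _ _ h1 hB2a hδle hεts htspos
      · -- case B2b : use q = 1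
        have hQt : ((q0 : ℤ) : ℝ) ^ ((1 : ℝ) + s) =
            t ^ ((1 : ℝ) + s) * (((q0 : ℤ) : ℝ) / t) ^ ((1 : ℝ) + s) := by
          rw [← mul_rpow ht0.le (by positivity)]
          rw [mul_div_cancel₀ _ (ne_of_gt ht0)]
        have hu1 : (1 : ℝ) ≤ ((q0 : ℤ) : ℝ) / t := by
          rw [le_div_iff₀ ht0]; linarith
        have hupow : 3 / 2 < (((q0 : ℤ) : ℝ) / t) ^ ((1 : ℝ) + s) := by
          rw [hQt] at hB2
          have h2 : (0 : ℝ) < t ^ ((1 : ℝ) + s) := rpow_pos_of_pos ht0 _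
          exact scal8 _ _ hB2 h2
        have husq : (((q0 : ℤ) : ℝ) / t) ^ ((1 : ℝ) + s) ≤ (((q0 : ℤ) : ℝ) / t) ^ 2 := by
          rw [← rpow_two]
          exact rpow_le_rpow_of_exponent_le hu1 (by linarith)
        have hQtsq : 3 / 2 * t ^ 2 < ((q0 : ℤ) : ℝ) ^ 2 := by
          have h3 : 3 / 2 < (((q0 : ℤ) : ℝ) / t) ^ 2 := lt_of_lt_of_le hupow husq
          have h4 : (((q0 : ℤ) : ℝ) / t) ^ 2 = ((q0 : ℤ) : ℝ) ^ 2 / t ^ 2 := by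
            rw [div_pow]
          rw [h4] at h3
          exact scal9 _ _ h3 (by positivity)
        -- t < (24/5) * δ
        have htlt : t < 24 / 5 * (((q0 : ℤ) : ℝ) - t) :=
          scal10 _ _ ht1 hδpos hB2b hQtsq
        -- q0 = 2
        have hq0eq : q0 = 2 := by
          have h6 : ((q0 : ℤ) : ℝ) < 3 := by linarith [hB2b, htlt, hδpos]
          have h7 : q0 < 3 := by exact_mod_cast h6
          omega
        have hQeq : ((q0 : ℤ) : ℝ) = 2 := by rw [hq0eq]; norm_num
        rw [hQeq] at hδle hδpos hδ1 hB2b htlt hQtsq hupow hu1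
        have ht85 : 8 / 5 < t := by linarith
        have htsq : t ^ 2 < 8 / 3 := by norm_num at hQtsq; linarith [hQtsq]
        -- lower bound for t ^ s
        have h54 : (2 : ℝ) / t ≤ 5 / 4 := by
          rw [div_le_div_iff₀ ht0 (by norm_num)]; linarith
        have h54pow : 3 / 2 < ((5 : ℝ) / 4) ^ ((1 : ℝ) + s) :=
          lt_of_lt_of_le hupow (rpow_le_rpow (by positivity) h54 (by linarith))
        have h54s : (6 : ℝ) / 5 < ((5 : ℝ) / 4) ^ s := by
          rw [rpow_add (by norm_num : (0:ℝ) < 5/4), rpow_one] at h54pow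
          linarith [h54pow]
        have hts : 36 / 25 < t ^ s := by
          have h8 : ((5 : ℝ) / 4) ^ (2 * s) = (((5 : ℝ) / 4) ^ s) ^ 2 := by
            rw [two_mul, rpow_add (by norm_num : (0:ℝ) < 5/4)]; ring
          have h9 : ((25 : ℝ) / 16) ^ s = ((5 : ℝ) / 4) ^ (2 * s) := by
            rw [rpow_mul (by norm_num : (0:ℝ) ≤ 5/4)]
            norm_num
          have h10 : ((25 : ℝ) / 16) ^ s ≤ t ^ s :=
            rpow_le_rpow (by norm_num) (by linarith) hs0.le
          have h11 : (6 / 5 : ℝ) ^ 2 < (((5 : ℝ) / 4) ^ s) ^ 2 := by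
            exact scal11 _ h54s
          rw [← h8, ← h9] at h11
          calc (36 : ℝ) / 25 = (6 / 5 : ℝ) ^ 2 := by norm_num
          _ < ((25 : ℝ) / 16) ^ s := h11
          _ ≤ t ^ s := h10
        have hεδ : (2 - t) / 2 ≤ ε := by linarith
        have hc18 : 18 / 25 * (2 - t) < c₂ := scal12 _ _ _ _ hεts hts hεδ hδpos
        refine ⟨1, one_pos, ?_, ?_⟩
        · intro i hi1 hi2
          have hx := abs_sub_round (((1 : ℕ) : ℝ) * ((a i - a i0) / (a iK - a i0)))
          simp only [Nat.cast_one, one_rpow, mul_one]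
          simp only [Nat.cast_one] at hx
          exact scal13 _ _ _ hx hc18 htsq ht85
        · simp only [Nat.cast_one, one_rpow, mul_one]
          have habs : |t - 1| = t - 1 := abs_of_nonneg (by linarith)
          rw [habs]
          exact scal14 _ _ hc18 htsq ht85



/-- Theorem 2.4: a very good inhomogeneous approximating lattice `o + dℤ` yields a
good homogeneous simultaneous Diophantine approximation with denominator `q`. -/
theorem inhom_to_hom (k : ℕ) (hk : 2 < k) (a : Fin k → ℝ) (hmono : StrictMono a)
    (d o c₂ : ℝ) (hc : 0 < c₂) (hd : 0 < d)
    (hd1 : d ≤ a ⟨k - 1, by omega⟩ - a ⟨0, by omega⟩)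
    (hN : (⨆ i : Fin k, ⨅ m : ℤ, |a i - o - (m : ℝ) * d|) / d *
      ((a ⟨k - 1, by omega⟩ - a ⟨0, by omega⟩) / d) ^ ((1 : ℝ) / ((k : ℝ) - 2)) < c₂) :
    ∃ q : ℕ, 0 < q ∧
      (∀ i : Fin k, 0 < (i : ℕ) → (i : ℕ) < k - 1 →
        |(q : ℝ) * ((a i - a ⟨0, by omega⟩) / (a ⟨k - 1, by omega⟩ - a ⟨0, by omega⟩)) -
          round ((q : ℝ) * ((a i - a ⟨0, by omega⟩) /
            (a ⟨k - 1, by omega⟩ - a ⟨0, by omega⟩)))| <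
          6 * c₂ * (q : ℝ) ^ (-(1 : ℝ) / ((k : ℝ) - 2))) ∧
      |(a ⟨k - 1, by omega⟩ - a ⟨0, by omega⟩) / d - (q : ℝ)| <
        3 * c₂ * (q : ℝ) ^ (-(1 : ℝ) / ((k : ℝ) - 2)) := by
  exact inhom_to_hom_aux k hk a hmono d o c₂ hc hd ⟨0, by omega⟩ ⟨k - 1, by omega⟩
    rfl rfl hd1 hN
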